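/- In the commutative monoid Q presented by ⟨x, z, a, b | x² = 1, a² = 1, z⁴ = z², b⁴ = b², abz = b, b³x = b², z³a = z²⟩, the set {b², x*b², z*b², x*z*b²} with multiplication of Q is a group with identity b², each of whose non-identity elements has order two (i.e., it is isomorphic to the Klein four-group Z₂ × Z₂). -/
import Mathlib


/-- In the misère quotient of 0.123, `{b², xb², zb², xzb²}` is a group with
identity `b²`, each of whose elements squares to `b²` (a Klein four-group). -/
theorem stmt14 {Q : Type*} [CommMonoid Q] (x z a b : Q)
    (hx : x ^ 2 = 1) (ha : a ^ 2 = 1) (hz : z ^ 4 = z ^ 2) (hb : b ^ 4 = b ^ 2)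
    (habz : a * b * z = b) (hbx : b ^ 3 * x = b ^ 2) (hza : z ^ 3 * a = z ^ 2) :
    (∀ u ∈ ({b ^ 2, x * b ^ 2, z * b ^ 2, x * z * b ^ 2} : Set Q),
      ∀ v ∈ ({b ^ 2, x * b ^ 2, z * b ^ 2, x * z * b ^ 2} : Set Q),
        u * v ∈ ({b ^ 2, x * b ^ 2, z * b ^ 2, x * z * b ^ 2} : Set Q)) ∧
    (∀ u ∈ ({b ^ 2, x * b ^ 2, z * b ^ 2, x * z * b ^ 2} : Set Q), b ^ 2 * u = u) ∧
    (∀ u ∈ ({b ^ 2, x * b ^ 2, z * b ^ 2, x * z * b ^ 2} : Set Q), u * u = b ^ 2) := by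
  have hb2 : b ^ 2 * b ^ 2 = b ^ 2 := by rw [← pow_add]; exact hb
  have hz2 : z ^ 2 * b ^ 2 = b ^ 2 := by
    have h := congrArg (· ^ 2) habz
    simp only [mul_pow, ha, one_mul] at h
    calc z ^ 2 * b ^ 2 = b ^ 2 * z ^ 2 := mul_comm _ _
    _ = b ^ 2 := h
  have hxx : x * x = 1 := by rw [← sq]; exact hx
  have hzz : z * (z * b ^ 2) = b ^ 2 := by rw [← mul_assoc, ← sq]; exact hz2
  have hbb : b * (b * (b * b)) = b * b := by
    have := hb; simpa [pow_succ, mul_assoc, mul_comm, mul_left_comm] using this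
  have hx' : ∀ c : Q, x * (x * c) = c := fun c => by rw [← mul_assoc, hxx, one_mul]
  have hz' : z * (z * (b * b)) = b * b := by simpa [sq] using hzz
  simp only [Set.mem_insert_iff, Set.mem_singleton_iff]
  refine ⟨?_, ?_, ?_⟩ <;>
    intro u hu <;>
    [skip; rcases hu with rfl|rfl|rfl|rfl; rcases hu with rfl|rfl|rfl|rfl]
  · intro v hv
    rcases hu with rfl|rfl|rfl|rfl <;> rcases hv with rfl|rfl|rfl|rfl <;>
      simp [hb2, hzz, hxx, hx', hz', sq, mul_assoc, mul_comm, mul_left_comm, hbb]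
  all_goals simp [hb2, hzz, hxx, hx', hz', sq, mul_assoc, mul_comm, mul_left_comm, hbb]
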